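/- Define h₁: ℝ → ℝ by h₁(x) = 1 for x ≤ 0; 1/2 for 0 < x ≤ 1; 1/(2x²) for 1 ≤ x < √2; g(x) for √2 ≤ x ≤ √3; h(x) for x ≥ √3, where g(x) = (c₁/250)(251 Φ̄(x) + φ(x)), h(x) = c₂ Φ̄(x), c₁ = 1/(4Φ̄(√2)), c₂ = c₁(1 + (1 + r(√3))/250). Then h₁(x) ≤ h(x) for all real x. -/

import Mathlib

open MeasureTheory Real Set

noncomputable def phi (x : ℝ) : ℝ := Real.exp (-x^2/2) / Real.sqrt (2*Real.pi)
noncomputable def Phibar (x : ℝ) : ℝ := ∫ u in Set.Ioi x, phi u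
noncomputable def mills (x : ℝ) : ℝ := phi x / Phibar x
noncomputable def c1 : ℝ := 1 / (4 * Phibar (Real.sqrt 2))
noncomputable def c2 : ℝ := c1 * (1 + (1 + mills (Real.sqrt 3))/250)
noncomputable def g (x : ℝ) : ℝ := c1/250 * (251 * Phibar x + phi x)
noncomputable def h (x : ℝ) : ℝ := c2 * Phibar x

noncomputable def h1 (x : ℝ) : ℝ :=
  if x ≤ 0 then 1
  else if x ≤ 1 then 1/2
  else if x < Real.sqrt 2 then 1/(2*x^2)
  else if x ≤ Real.sqrt 3 then g x
  else h x

lemma sqrt_two_pi_lb : (2.5066:ℝ) ≤ Real.sqrt (2*Real.pi) := by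
  rw [show (2.5066:ℝ) = Real.sqrt (2.5066^2) from (Real.sqrt_sq (by norm_num)).symm]
  apply Real.sqrt_le_sqrt
  nlinarith [Real.pi_gt_d6]

lemma sqrt_two_pi_ub : Real.sqrt (2*Real.pi) ≤ 2.50663 := by
  rw [show (2.50663:ℝ) = Real.sqrt (2.50663^2) from (Real.sqrt_sq (by norm_num)).symm]
  apply Real.sqrt_le_sqrt
  nlinarith [Real.pi_lt_d6]

lemma phi_pos (x : ℝ) : 0 < phi x := by
  unfold phi
  have h : (0:ℝ) < Real.sqrt (2*Real.pi) := lt_of_lt_of_le (by norm_num) sqrt_two_pi_lb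
  positivity

lemma continuous_phi : Continuous phi := by
  unfold phi; fun_prop

lemma integrable_phi : Integrable phi := by
  have h : Integrable (fun x : ℝ => Real.exp (-(1/2) * x^2)) :=
    integrable_exp_neg_mul_sq (by norm_num)
  have h2 := h.div_const (Real.sqrt (2*Real.pi))
  have : phi = fun x : ℝ => Real.exp (-(1/2) * x^2) / Real.sqrt (2*Real.pi) := by
    funext x; unfold phi; rw [show -x^2/2 = -(1/2)*x^2 by ring]
  rw [this]; exact h2

lemma intervalIntegrable_phi (a b : ℝ) : IntervalIntegrable phi volume a b :=
  integrable_phi.intervalIntegrable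

lemma Phibar_split {a b : ℝ} (hab : a ≤ b) :
    Phibar a = (∫ t in a..b, phi t) + Phibar b := by
  unfold Phibar
  rw [intervalIntegral.integral_of_le hab,
    ← MeasureTheory.setIntegral_union (Ioc_disjoint_Ioi le_rfl) measurableSet_Ioi
      integrable_phi.integrableOn integrable_phi.integrableOn,
    Set.Ioc_union_Ioi_eq_Ioi hab]

lemma Phibar_pos (x : ℝ) : 0 < Phibar x := by
  unfold Phibar
  rw [setIntegral_pos_iff_support_of_nonneg_ae
    (Filter.Eventually.of_forall fun t => (phi_pos t).le)
    integrable_phi.integrableOn]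
  have hs : Function.support phi = Set.univ := by
    apply Set.eq_univ_of_forall
    intro t
    exact (phi_pos t).ne'
  rw [hs, Set.univ_inter, Real.volume_Ioi]
  norm_num

lemma Phibar_anti : Antitone Phibar := by
  intro a b hab
  rw [Phibar_split hab]
  have h : 0 ≤ ∫ t in a..b, phi t := intervalIntegral.integral_nonneg hab (fun t _ => (phi_pos t).le)
  linarith

lemma hasDerivAt_phi (x : ℝ) : HasDerivAt phi (-x * phi x) x := by
  have h1 : HasDerivAt (fun y : ℝ => -y^2/2) (-x) x := by
    have h := ((hasDerivAt_pow 2 x).div_const 2).fun_neg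
    rw [show (fun y : ℝ => -y^2/2) = fun y => -(y^2/2) by funext y; ring]
    refine h.congr_deriv ?_
    norm_num
  have h2 := (h1.exp).div_const (Real.sqrt (2*Real.pi))
  show HasDerivAt (fun y : ℝ => Real.exp (-y^2/2) / Real.sqrt (2*Real.pi)) (-x * phi x) x
  refine h2.congr_deriv ?_
  unfold phi; ring

lemma Phibar_eq (x : ℝ) : Phibar x = Phibar 0 - ∫ t in (0:ℝ)..x, phi t := by
  rcases le_total 0 x with h|h
  · rw [Phibar_split h]; ring
  · rw [Phibar_split (a := x) (b := 0) h, intervalIntegral.integral_symm]; ring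

lemma hasDerivAt_Phibar (x : ℝ) : HasDerivAt Phibar (-phi x) x := by
  have h : HasDerivAt (fun y => ∫ t in (0:ℝ)..y, phi t) (phi x) x :=
    intervalIntegral.integral_hasDerivAt_right (intervalIntegrable_phi 0 x)
      (continuous_phi.stronglyMeasurableAtFilter _ _)
      continuous_phi.continuousAt
  have h2 := (hasDerivAt_const x (Phibar 0)).fun_sub h
  have he : (fun y => Phibar 0 - ∫ t in (0:ℝ)..y, phi t) = Phibar := by
    funext y; exact (Phibar_eq y).symm
  rw [he] at h2
  simpa using h2

lemma continuous_Phibar : Continuous Phibar :=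
  continuous_iff_continuousAt.2 fun x => (hasDerivAt_Phibar x).continuousAt

lemma tendsto_phi_atTop : Filter.Tendsto phi Filter.atTop (nhds 0) := by
  have h1 : Filter.Tendsto (fun t : ℝ => -t^2/2) Filter.atTop Filter.atBot := by
    apply Filter.Tendsto.atBot_div_const (by norm_num)
    apply Filter.tendsto_neg_atBot_iff.2
    exact Filter.tendsto_pow_atTop (by norm_num)
  have h2 := (Real.tendsto_exp_atBot).comp h1
  have h3 := h2.div_const (Real.sqrt (2*Real.pi))
  rw [zero_div] at h3
  exact h3

lemma integrableOn_id_mul_phi (a : ℝ) : IntegrableOn (fun t => t * phi t) (Ioi a) := by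
  have h : Integrable (fun x : ℝ => x * Real.exp (-(1/2) * x^2)) :=
    integrable_mul_exp_neg_mul_sq (by norm_num)
  have h2 := (h.div_const (Real.sqrt (2*Real.pi))).integrableOn (s := Ioi a)
  apply h2.congr_fun ?_ measurableSet_Ioi
  intro t _
  unfold phi
  simp only []
  rw [show -(1/2) * t^2 = -t^2/2 by ring]
  ring

lemma integral_id_mul_phi (a : ℝ) : ∫ t in Ioi a, t * phi t = phi a := by
  have h := integral_Ioi_of_hasDerivAt_of_tendsto' (f := fun t => -phi t)
    (f' := fun t => t * phi t) (a := a) (m := 0)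
    (fun x _ => by simpa using (hasDerivAt_phi x).fun_neg)
    (integrableOn_id_mul_phi a) (by simpa using tendsto_phi_atTop.neg)
  simpa using h

lemma mills_bound {x : ℝ} (hx : 0 ≤ x) : x * Phibar x ≤ phi x := by
  have h1 : x * Phibar x = ∫ t in Ioi x, x * phi t := by
    unfold Phibar; rw [MeasureTheory.integral_const_mul]
  rw [h1, ← integral_id_mul_phi x]
  apply setIntegral_mono_on (integrable_phi.integrableOn.const_mul x)
    (integrableOn_id_mul_phi x) measurableSet_Ioi
  intro t ht
  exact mul_le_mul_of_nonneg_right (le_of_lt ht) (phi_pos t).le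

lemma Phibar_zero : Phibar 0 = 1/2 := by
  unfold Phibar phi
  rw [MeasureTheory.integral_div]
  have h : ∫ u in Ioi (0:ℝ), Real.exp (-u^2/2) = Real.sqrt (2*Real.pi)/2 := by
    have h2 := integral_gaussian_Ioi (1/2)
    simp_rw [show ∀ u:ℝ, -(1/2) * u^2 = -u^2/2 from fun u => by ring] at h2
    rw [show Real.pi/(1/2) = 2*Real.pi by ring] at h2
    rw [h2]
  rw [h]
  have hs : Real.sqrt (2*Real.pi) ≠ 0 := by
    positivity
  field_simp


lemma exp_neg_bounds {s : ℝ} (h0 : 0 ≤ s) (h1 : s ≤ 1) :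
    1 - s + s^2/2 - s^3/6 - 5*s^4/96 ≤ Real.exp (-s) ∧
    Real.exp (-s) ≤ 1 - s + s^2/2 - s^3/6 + 5*s^4/96 := by
  have h := Real.exp_bound (x := -s) (by rwa [abs_neg, abs_of_nonneg h0]) (n := 4) (by norm_num)
  have hsum : ∑ i ∈ Finset.range 4, (-s)^i / (Nat.factorial i) = 1 - s + s^2/2 - s^3/6 := by
    simp [Finset.sum_range_succ, Nat.factorial]
    ring
  rw [hsum, abs_neg, abs_of_nonneg h0] at h
  norm_num [Nat.factorial] at h
  have h3 := abs_le.1 h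
  constructor <;> nlinarith [h3.1, h3.2]

lemma exp_arg_red {s : ℝ} : Real.exp (-(8*s)) = Real.exp (-s)^8 := by
  rw [show -(8*s) = (8:ℕ) * (-s) by push_cast; ring, Real.exp_nat_mul]

lemma phi_lb_node {a s pl : ℝ} (h0 : 0 ≤ s) (h1 : s ≤ 1) (hq : a^2/2 ≤ 8*s)
    (hval : 0 ≤ 1 - s + s^2/2 - s^3/6 - 5*s^4/96)
    (hpl : pl * 2.50663 ≤ (1 - s + s^2/2 - s^3/6 - 5*s^4/96)^8) (hpl0 : 0 ≤ pl) :
    pl ≤ phi a := by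
  unfold phi
  have hsq : (0:ℝ) < Real.sqrt (2*Real.pi) := lt_of_lt_of_le (by norm_num) sqrt_two_pi_lb
  rw [le_div_iff₀ hsq]
  calc pl * Real.sqrt (2*Real.pi) ≤ pl * 2.50663 :=
        mul_le_mul_of_nonneg_left sqrt_two_pi_ub hpl0
    _ ≤ (1 - s + s^2/2 - s^3/6 - 5*s^4/96)^8 := hpl
    _ ≤ Real.exp (-s)^8 := pow_le_pow_left₀ hval (exp_neg_bounds h0 h1).1 8
    _ = Real.exp (-(8*s)) := exp_arg_red.symm
    _ ≤ Real.exp (-a^2/2) := Real.exp_le_exp.2 (by linarith)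

lemma phi_ub_node {a s pu : ℝ} (h0 : 0 ≤ s) (h1 : s ≤ 1) (hq : 8*s ≤ a^2/2)
    (hpu : (1 - s + s^2/2 - s^3/6 + 5*s^4/96)^8 ≤ pu * 2.5066) (hpu0 : 0 ≤ pu) :
    phi a ≤ pu := by
  unfold phi
  have hsq : (0:ℝ) < Real.sqrt (2*Real.pi) := lt_of_lt_of_le (by norm_num) sqrt_two_pi_lb
  rw [div_le_iff₀ hsq]
  calc Real.exp (-a^2/2) ≤ Real.exp (-(8*s)) := Real.exp_le_exp.2 (by linarith)
    _ = Real.exp (-s)^8 := exp_arg_red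
    _ ≤ (1 - s + s^2/2 - s^3/6 + 5*s^4/96)^8 :=
        pow_le_pow_left₀ (Real.exp_nonneg _) (exp_neg_bounds h0 h1).2 8
    _ ≤ pu * 2.5066 := hpu
    _ ≤ pu * Real.sqrt (2*Real.pi) := mul_le_mul_of_nonneg_left sqrt_two_pi_lb hpu0

lemma integral_piece_poly (a b c : ℝ) :
    ∫ t in a..b, (1 - (a*(t-a) + (t-a)^2/2) + c*(a*(t-a) + (t-a)^2/2)^2)
      = (b-a) - a*(b-a)^2/2 - (b-a)^3/6
        + c*(a^2*(b-a)^3/3 + a*(b-a)^4/4 + (b-a)^5/20) := by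
  have key : ∀ t : ℝ, HasDerivAt (fun u => (u-a) - a*(u-a)^2/2 - (u-a)^3/6
      + c*(a^2*(u-a)^3/3 + a*(u-a)^4/4 + (u-a)^5/20))
      (1 - (a*(t-a) + (t-a)^2/2) + c*(a*(t-a) + (t-a)^2/2)^2) t := by
    intro t
    have hid : HasDerivAt (fun u : ℝ => u - a) 1 t := (hasDerivAt_id t).sub_const a
    have h2 := hid.pow 2
    have h3 := hid.pow 3
    have h4 := hid.pow 4
    have h5 := hid.pow 5
    have H := ((hid.fun_sub ((h2.const_mul a).div_const 2)).fun_sub (h3.div_const 6)).fun_add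
      (HasDerivAt.const_mul c ((((h3.const_mul (a^2)).div_const 3).fun_add
        ((h4.const_mul a).div_const 4)).fun_add (h5.div_const 20)))
    refine H.congr_deriv ?_
    push_cast
    ring
  rw [intervalIntegral.integral_eq_sub_of_hasDerivAt (fun t _ => key t)
    (Continuous.intervalIntegrable (by fun_prop) a b)]
  ring

lemma phi_factor {a t : ℝ} :
    phi t = phi a * Real.exp (-(a*(t-a) + (t-a)^2/2)) := by
  unfold phi
  rw [div_mul_eq_mul_div, ← Real.exp_add]
  congr 2
  ring

lemma piece_lower {a b pl lv : ℝ} (ha : 0 ≤ a) (hab : a ≤ b)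
    (hM1 : a*(b-a) + (b-a)^2/2 ≤ 1)
    (hpl : pl ≤ phi a) (hpl0 : 0 ≤ pl)
    (hP : 0 ≤ (b-a) - a*(b-a)^2/2 - (b-a)^3/6
        + (1/2 - (a*(b-a)+(b-a)^2/2)/6 - 5*(a*(b-a)+(b-a)^2/2)^2/96)
          * (a^2*(b-a)^3/3 + a*(b-a)^4/4 + (b-a)^5/20))
    (hlv : lv ≤ pl * ((b-a) - a*(b-a)^2/2 - (b-a)^3/6
        + (1/2 - (a*(b-a)+(b-a)^2/2)/6 - 5*(a*(b-a)+(b-a)^2/2)^2/96)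
          * (a^2*(b-a)^3/3 + a*(b-a)^4/4 + (b-a)^5/20))) :
    lv ≤ ∫ t in a..b, phi t := by
  set c : ℝ := 1/2 - (a*(b-a)+(b-a)^2/2)/6 - 5*(a*(b-a)+(b-a)^2/2)^2/96 with hc
  have hpt : ∀ t ∈ Icc a b,
      phi a * (1 - (a*(t-a) + (t-a)^2/2) + c*(a*(t-a) + (t-a)^2/2)^2) ≤ phi t := by
    intro t ht
    obtain ⟨hta, htb⟩ := ht
    rw [phi_factor (a := a) (t := t)]
    apply mul_le_mul_of_nonneg_left _ (phi_pos a).le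
    have hs0 : 0 ≤ a*(t-a) + (t-a)^2/2 := by nlinarith
    have hsM : a*(t-a) + (t-a)^2/2 ≤ a*(b-a)+(b-a)^2/2 := by nlinarith
    have hs1 : a*(t-a) + (t-a)^2/2 ≤ 1 := le_trans hsM hM1
    have he := (exp_neg_bounds hs0 hs1).1
    have hM0 : 0 ≤ a*(b-a)+(b-a)^2/2 := le_trans hs0 hsM
    rw [hc]
    nlinarith [mul_nonneg (mul_nonneg (sub_nonneg.2 hsM) (by linarith :
        0 ≤ (a*(b-a)+(b-a)^2/2) + (a*(t-a) + (t-a)^2/2)))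
        (sq_nonneg (a*(t-a) + (t-a)^2/2)),
      mul_nonneg (sub_nonneg.2 hsM) (sq_nonneg (a*(t-a) + (t-a)^2/2))]
  have hInt := intervalIntegral.integral_mono_on hab
    (Continuous.intervalIntegrable (by fun_prop) a b) (intervalIntegrable_phi a b) hpt
  rw [intervalIntegral.integral_const_mul, integral_piece_poly] at hInt
  calc lv ≤ pl * ((b-a) - a*(b-a)^2/2 - (b-a)^3/6
        + c * (a^2*(b-a)^3/3 + a*(b-a)^4/4 + (b-a)^5/20)) := by rw [hc]; exact hlv
    _ ≤ phi a * ((b-a) - a*(b-a)^2/2 - (b-a)^3/6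
        + c * (a^2*(b-a)^3/3 + a*(b-a)^4/4 + (b-a)^5/20)) := by
        apply mul_le_mul_of_nonneg_right hpl
        rw [hc]; exact hP
    _ ≤ ∫ t in a..b, phi t := hInt

lemma piece_upper {a b pu uv : ℝ} (ha : 0 ≤ a) (hab : a ≤ b)
    (hM1 : a*(b-a) + (b-a)^2/2 ≤ 1)
    (hpu : phi a ≤ pu)
    (hQ : 0 ≤ (b-a) - a*(b-a)^2/2 - (b-a)^3/6
        + (1/2)*(a^2*(b-a)^3/3 + a*(b-a)^4/4 + (b-a)^5/20))
    (huv : pu * ((b-a) - a*(b-a)^2/2 - (b-a)^3/6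
        + (1/2)*(a^2*(b-a)^3/3 + a*(b-a)^4/4 + (b-a)^5/20)) ≤ uv) :
    (∫ t in a..b, phi t) ≤ uv := by
  have hpt : ∀ t ∈ Icc a b, phi t ≤
      phi a * (1 - (a*(t-a) + (t-a)^2/2) + (1/2)*(a*(t-a) + (t-a)^2/2)^2) := by
    intro t ht
    obtain ⟨hta, htb⟩ := ht
    rw [phi_factor (a := a) (t := t)]
    apply mul_le_mul_of_nonneg_left _ (phi_pos a).le
    have hs0 : 0 ≤ a*(t-a) + (t-a)^2/2 := by nlinarith
    have hsM : a*(t-a) + (t-a)^2/2 ≤ a*(b-a)+(b-a)^2/2 := by nlinarith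
    have hs1 : a*(t-a) + (t-a)^2/2 ≤ 1 := le_trans hsM hM1
    have he := (exp_neg_bounds hs0 hs1).2
    nlinarith [mul_nonneg (mul_nonneg hs0 hs0) (mul_nonneg hs0
      (by linarith : (0:ℝ) ≤ 16 - 5*(a*(t-a) + (t-a)^2/2)))]
  have hInt := intervalIntegral.integral_mono_on hab
    (intervalIntegrable_phi a b) (Continuous.intervalIntegrable (by fun_prop) a b) hpt
  rw [intervalIntegral.integral_const_mul, integral_piece_poly] at hInt
  calc (∫ t in a..b, phi t) ≤ phi a * ((b-a) - a*(b-a)^2/2 - (b-a)^3/6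
        + (1/2)*(a^2*(b-a)^3/3 + a*(b-a)^4/4 + (b-a)^5/20)) := hInt
    _ ≤ pu * ((b-a) - a*(b-a)^2/2 - (b-a)^3/6
        + (1/2)*(a^2*(b-a)^3/3 + a*(b-a)^4/4 + (b-a)^5/20)) :=
        mul_le_mul_of_nonneg_right hpu hQ
    _ ≤ uv := huv

lemma philb0 : (241967/1000000:ℝ) ≤ phi (1) :=
  phi_lb_node (s := 1/16) (by norm_num) (by norm_num) (by norm_num) (by norm_num) (by norm_num) (by norm_num)

lemma philb1 : (43543/200000:ℝ) ≤ phi (11/10) :=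
  phi_lb_node (s := 757/10000) (by norm_num) (by norm_num) (by norm_num) (by norm_num) (by norm_num) (by norm_num)

lemma philb2 : (7767/40000:ℝ) ≤ phi (6/5) :=
  phi_lb_node (s := 9/100) (by norm_num) (by norm_num) (by norm_num) (by norm_num) (by norm_num) (by norm_num)

lemma philb3 : (10703/62500:ℝ) ≤ phi (13/10) :=
  phi_lb_node (s := 1057/10000) (by norm_num) (by norm_num) (by norm_num) (by norm_num) (by norm_num) (by norm_num)

lemma phiub0 : phi (707/500) ≤ (73443/500000:ℝ) :=
  phi_ub_node (s := 1249/10000) (by norm_num) (by norm_num) (by norm_num) (by norm_num) (by norm_num)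

lemma phiub1 : phi (8/5) ≤ (110931/1000000:ℝ) :=
  phi_ub_node (s := 4/25) (by norm_num) (by norm_num) (by norm_num) (by norm_num) (by norm_num)

lemma phiub2 : phi (9/5) ≤ (78967/1000000:ℝ) :=
  phi_ub_node (s := 81/400) (by norm_num) (by norm_num) (by norm_num) (by norm_num) (by norm_num)

lemma phiub3 : phi (2) ≤ (54019/1000000:ℝ) :=
  phi_ub_node (s := 1/4) (by norm_num) (by norm_num) (by norm_num) (by norm_num) (by norm_num)

lemma phiub4 : phi (11/5) ≤ (35517/1000000:ℝ) :=
  phi_ub_node (s := 121/400) (by norm_num) (by norm_num) (by norm_num) (by norm_num) (by norm_num)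

lemma phiub5 : phi (12/5) ≤ (5613/250000:ℝ) :=
  phi_ub_node (s := 9/25) (by norm_num) (by norm_num) (by norm_num) (by norm_num) (by norm_num)

lemma phiub6 : phi (27/10) ≤ (10503/1000000:ℝ) :=
  phi_ub_node (s := 1139/2500) (by norm_num) (by norm_num) (by norm_num) (by norm_num) (by norm_num)

lemma phiub7 : phi (3) ≤ (181/40000:ℝ) :=
  phi_ub_node (s := 9/16) (by norm_num) (by norm_num) (by norm_num) (by norm_num) (by norm_num)

lemma int_low : (39971/500000:ℝ) ≤ ∫ t in (1:ℝ)..(707/500), phi t := by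
  have p0 : (5747/250000:ℝ) ≤ ∫ t in (1:ℝ)..(11/10), phi t :=
    piece_lower (by norm_num) (by norm_num) (by norm_num) philb0 (by norm_num) (by norm_num) (by norm_num)
  have p1 : (10291/500000:ℝ) ≤ ∫ t in (11/10:ℝ)..(6/5), phi t :=
    piece_lower (by norm_num) (by norm_num) (by norm_num) philb1 (by norm_num) (by norm_num) (by norm_num)
  have p2 : (18267/1000000:ℝ) ≤ ∫ t in (6/5:ℝ)..(13/10), phi t :=
    piece_lower (by norm_num) (by norm_num) (by norm_num) philb2 (by norm_num) (by norm_num) (by norm_num)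
  have p3 : (3621/200000:ℝ) ≤ ∫ t in (13/10:ℝ)..(707/500), phi t :=
    piece_lower (by norm_num) (by norm_num) (by norm_num) philb3 (by norm_num) (by norm_num) (by norm_num)
  have e0 : (∫ t in (1:ℝ)..(11/10), phi t) + (∫ t in (11/10:ℝ)..(6/5), phi t) = ∫ t in (1:ℝ)..(6/5), phi t :=
    intervalIntegral.integral_add_adjacent_intervals (intervalIntegrable_phi _ _) (intervalIntegrable_phi _ _)
  have e1 : (∫ t in (1:ℝ)..(6/5), phi t) + (∫ t in (6/5:ℝ)..(13/10), phi t) = ∫ t in (1:ℝ)..(13/10), phi t :=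
    intervalIntegral.integral_add_adjacent_intervals (intervalIntegrable_phi _ _) (intervalIntegrable_phi _ _)
  have e2 : (∫ t in (1:ℝ)..(13/10), phi t) + (∫ t in (13/10:ℝ)..(707/500), phi t) = ∫ t in (1:ℝ)..(707/500), phi t :=
    intervalIntegral.integral_add_adjacent_intervals (intervalIntegrable_phi _ _) (intervalIntegrable_phi _ _)
  linarith

lemma Phibar_ub : Phibar (707/500) ≤ (39609/500000:ℝ) := by
  have q0 : (∫ t in (707/500:ℝ)..(8/5), phi t) ≤ (11959/500000:ℝ) :=
    piece_upper (by norm_num) (by norm_num) (by norm_num) phiub0 (by norm_num) (by norm_num)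
  have q1 : (∫ t in (8/5:ℝ)..(9/5), phi t) ≤ (2363/125000:ℝ) :=
    piece_upper (by norm_num) (by norm_num) (by norm_num) phiub1 (by norm_num) (by norm_num)
  have q2 : (∫ t in (9/5:ℝ)..(2), phi t) ≤ (413/31250:ℝ) :=
    piece_upper (by norm_num) (by norm_num) (by norm_num) phiub2 (by norm_num) (by norm_num)
  have q3 : (∫ t in (2:ℝ)..(11/5), phi t) ≤ (4441/500000:ℝ) :=
    piece_upper (by norm_num) (by norm_num) (by norm_num) phiub3 (by norm_num) (by norm_num)
  have q4 : (∫ t in (11/5:ℝ)..(12/5), phi t) ≤ (5739/1000000:ℝ) :=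
    piece_upper (by norm_num) (by norm_num) (by norm_num) phiub4 (by norm_num) (by norm_num)
  have q5 : (∫ t in (12/5:ℝ)..(27/10), phi t) ≤ (303/62500:ℝ) :=
    piece_upper (by norm_num) (by norm_num) (by norm_num) phiub5 (by norm_num) (by norm_num)
  have q6 : (∫ t in (27/10:ℝ)..(3), phi t) ≤ (1101/500000:ℝ) :=
    piece_upper (by norm_num) (by norm_num) (by norm_num) phiub6 (by norm_num) (by norm_num)
  have s0 : Phibar (707/500) = (∫ t in (707/500:ℝ)..(8/5), phi t) + Phibar (8/5) :=
    Phibar_split (by norm_num)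
  have s1 : Phibar (8/5) = (∫ t in (8/5:ℝ)..(9/5), phi t) + Phibar (9/5) :=
    Phibar_split (by norm_num)
  have s2 : Phibar (9/5) = (∫ t in (9/5:ℝ)..(2), phi t) + Phibar (2) :=
    Phibar_split (by norm_num)
  have s3 : Phibar (2) = (∫ t in (2:ℝ)..(11/5), phi t) + Phibar (11/5) :=
    Phibar_split (by norm_num)
  have s4 : Phibar (11/5) = (∫ t in (11/5:ℝ)..(12/5), phi t) + Phibar (12/5) :=
    Phibar_split (by norm_num)
  have s5 : Phibar (12/5) = (∫ t in (12/5:ℝ)..(27/10), phi t) + Phibar (27/10) :=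
    Phibar_split (by norm_num)
  have s6 : Phibar (27/10) = (∫ t in (27/10:ℝ)..(3), phi t) + Phibar (3) :=
    Phibar_split (by norm_num)
  have tail : Phibar 3 ≤ (1509/1000000:ℝ) := by
    have hm := mills_bound (x := 3) (by norm_num)
    linarith [phiub7]
  linarith

lemma sqrt2_lb : (707/500:ℝ) ≤ Real.sqrt 2 := by
  rw [show (707/500:ℝ) = Real.sqrt ((707/500)^2) from (Real.sqrt_sq (by norm_num)).symm]
  exact Real.sqrt_le_sqrt (by norm_num)

lemma sqrt2_ub : Real.sqrt 2 ≤ 1.415 := by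
  rw [show (1.415:ℝ) = Real.sqrt (1.415^2) from (Real.sqrt_sq (by norm_num)).symm]
  exact Real.sqrt_le_sqrt (by norm_num)

lemma sqrt3_lb : (1.732:ℝ) ≤ Real.sqrt 3 := by
  rw [show (1.732:ℝ) = Real.sqrt (1.732^2) from (Real.sqrt_sq (by norm_num)).symm]
  exact Real.sqrt_le_sqrt (by norm_num)

lemma sqrt3_ub : Real.sqrt 3 ≤ 1.733 := by
  rw [show (1.733:ℝ) = Real.sqrt (1.733^2) from (Real.sqrt_sq (by norm_num)).symm]
  exact Real.sqrt_le_sqrt (by norm_num)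

lemma sqrt2_le_sqrt3 : Real.sqrt 2 ≤ Real.sqrt 3 := Real.sqrt_le_sqrt (by norm_num)

lemma one_le_sqrt2 : (1:ℝ) ≤ Real.sqrt 2 := by linarith [sqrt2_lb]

lemma Phibar_sqrt2_ub : Phibar (Real.sqrt 2) ≤ (39609/500000:ℝ) :=
  le_trans (Phibar_anti sqrt2_lb) Phibar_ub

lemma Phibar_one_lb : (39971/500000:ℝ) + Phibar (Real.sqrt 2) ≤ Phibar 1 := by
  rw [Phibar_split one_le_sqrt2]
  have e : (∫ t in (1:ℝ)..(707/500), phi t) + (∫ t in (707/500:ℝ)..(Real.sqrt 2), phi t)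
      = ∫ t in (1:ℝ)..(Real.sqrt 2), phi t :=
    intervalIntegral.integral_add_adjacent_intervals (intervalIntegrable_phi _ _)
      (intervalIntegrable_phi _ _)
  have h2 : (0:ℝ) ≤ ∫ t in (707/500:ℝ)..(Real.sqrt 2), phi t :=
    intervalIntegral.integral_nonneg sqrt2_lb (fun t _ => (phi_pos t).le)
  linarith [int_low]

lemma c1_pos : 0 < c1 := by
  unfold c1
  have := Phibar_pos (Real.sqrt 2)
  positivity

lemma mills_sqrt3_ge : Real.sqrt 3 ≤ mills (Real.sqrt 3) := by
  unfold mills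
  rw [le_div_iff₀ (Phibar_pos _)]
  exact mills_bound (by positivity)

lemma c2_ge : c1 * (1 + 2.732/250) ≤ c2 := by
  unfold c2
  have h1 := mills_sqrt3_ge
  have h2 := sqrt3_lb
  have h3 := c1_pos
  nlinarith

lemma c2_pos : 0 < c2 := lt_of_lt_of_le (by nlinarith [c1_pos]) c2_ge

lemma c1_id : 4 * Phibar (Real.sqrt 2) * c1 = 1 := by
  unfold c1
  rw [mul_one_div]
  apply div_self
  have := Phibar_pos (Real.sqrt 2)
  positivity

lemma keyA : 1 ≤ 2 * Phibar 1 * c2 := by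
  have hU := Phibar_sqrt2_ub
  have hL := Phibar_one_lb
  have hP := Phibar_pos (Real.sqrt 2)
  have hc2 := c2_ge
  have hid := c1_id
  have hc1 := c1_pos
  have h1 : 2 * ((39971/500000:ℝ) + Phibar (Real.sqrt 2)) * (c1 * (1 + 2.732/250))
      ≤ 2 * Phibar 1 * c2 := by
    apply mul_le_mul (by linarith) hc2 (by nlinarith) (by nlinarith [Phibar_pos 1])
  -- c1 ≥ 1/(4U):
  have hc1U : c1 * (4 * (39609/500000:ℝ)) ≥ 1 := by
    nlinarith
  nlinarith
lemma keyB : 1 ≤ 4 * Phibar (Real.sqrt 2) * c2 := by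
  have hid := c1_id
  have hc2 := c2_ge
  have hP := Phibar_pos (Real.sqrt 2)
  nlinarith

lemma keyC : (2:ℝ) ≤ c2 := by
  have hU := Phibar_sqrt2_ub
  have hP := Phibar_pos (Real.sqrt 2)
  have hc2 := c2_ge
  have hid := c1_id
  nlinarith

lemma hasDerivAt_psi (x : ℝ) :
    HasDerivAt (fun y => 2 * Phibar y - y * phi y) ((x^2 - 3) * phi x) x := by
  have h1 := (hasDerivAt_Phibar x).const_mul 2
  have h2 := (hasDerivAt_id x).fun_mul (hasDerivAt_phi x)
  have H := h1.fun_sub h2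
  refine H.congr_deriv ?_
  simp only [id_eq]
  ring

lemma psi_anti : AntitoneOn (fun y => 2 * Phibar y - y * phi y) (Icc 1 (Real.sqrt 2)) := by
  apply antitoneOn_of_deriv_nonpos (convex_Icc _ _)
  · exact ((continuous_const.mul continuous_Phibar).sub
      (continuous_id.mul continuous_phi)).continuousOn
  · intro t _
    exact (hasDerivAt_psi t).differentiableAt.differentiableWithinAt
  · intro t ht
    rw [interior_Icc] at ht
    rw [(hasDerivAt_psi t).deriv]
    have h1 : t ≤ Real.sqrt 2 := ht.2.le
    have h2 : (Real.sqrt 2)^2 = 2 := Real.sq_sqrt (by norm_num)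
    have h3 : (1:ℝ) < t := ht.1
    have h4 : t^2 ≤ (Real.sqrt 2)^2 := pow_le_pow_left₀ (by linarith) h1 2
    rw [h2] at h4
    nlinarith [mul_nonneg (by nlinarith : (0:ℝ) ≤ 3 - t^2) (phi_pos t).le]

lemma hasDerivAt_G (x : ℝ) :
    HasDerivAt (fun y => y^2 * Phibar y) (x * (2 * Phibar x - x * phi x)) x := by
  have H := (hasDerivAt_pow 2 x).fun_mul (hasDerivAt_Phibar x)
  refine H.congr_deriv ?_
  push_cast
  ring

lemma G_min {x : ℝ} (h1 : 1 ≤ x) (h2 : x ≤ Real.sqrt 2) :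
    Phibar 1 ≤ x^2 * Phibar x ∨ 2 * Phibar (Real.sqrt 2) ≤ x^2 * Phibar x := by
  have contG : Continuous (fun y : ℝ => y^2 * Phibar y) :=
    (continuous_pow 2).mul continuous_Phibar
  rcases le_or_gt 0 (2 * Phibar x - x * phi x) with hψ | hψ
  · left
    have hmono : MonotoneOn (fun y : ℝ => y^2 * Phibar y) (Icc 1 x) := by
      apply monotoneOn_of_deriv_nonneg (convex_Icc _ _) contG.continuousOn
        (fun t _ => (hasDerivAt_G t).differentiableAt.differentiableWithinAt)
      intro t ht
      rw [interior_Icc] at ht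
      rw [(hasDerivAt_G t).deriv]
      have hψt : 2 * Phibar x - x * phi x ≤ 2 * Phibar t - t * phi t :=
        psi_anti ⟨ht.1.le, le_trans ht.2.le h2⟩ ⟨h1, h2⟩ ht.2.le
      have ht0 : (0:ℝ) < t := lt_trans one_pos ht.1
      nlinarith
    have := hmono (left_mem_Icc.2 h1) (right_mem_Icc.2 h1) h1
    simpa using this
  · right
    have hanti : AntitoneOn (fun y : ℝ => y^2 * Phibar y) (Icc x (Real.sqrt 2)) := by
      apply antitoneOn_of_deriv_nonpos (convex_Icc _ _) contG.continuousOn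
        (fun t _ => (hasDerivAt_G t).differentiableAt.differentiableWithinAt)
      intro t ht
      rw [interior_Icc] at ht
      rw [(hasDerivAt_G t).deriv]
      have hψt : 2 * Phibar t - t * phi t ≤ 2 * Phibar x - x * phi x :=
        psi_anti ⟨h1, h2⟩ ⟨le_trans h1 ht.1.le, ht.2.le⟩ ht.1.le
      have ht0 : (0:ℝ) < t := lt_of_le_of_lt (by linarith) ht.1
      nlinarith
    have hG := hanti (left_mem_Icc.2 h2) (right_mem_Icc.2 h2) h2
    have h2' : (Real.sqrt 2)^2 = 2 := Real.sq_sqrt (by norm_num)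
    have hG' : (Real.sqrt 2)^2 * Phibar (Real.sqrt 2) ≤ x^2 * Phibar x := hG
    rw [h2'] at hG'
    linarith

lemma hasDerivAt_F (x : ℝ) :
    HasDerivAt (fun y => Phibar y / phi y) ((x * Phibar x - phi x) / phi x) x := by
  have H := (hasDerivAt_Phibar x).fun_div (hasDerivAt_phi x) (phi_pos x).ne'
  refine H.congr_deriv ?_
  field_simp [(phi_pos x).ne']
  ring

lemma F_anti : AntitoneOn (fun y => Phibar y / phi y) (Icc (Real.sqrt 2) (Real.sqrt 3)) := by
  apply antitoneOn_of_deriv_nonpos (convex_Icc _ _)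
  · exact (continuous_Phibar.div continuous_phi fun t => (phi_pos t).ne').continuousOn
  · intro t _
    exact (hasDerivAt_F t).differentiableAt.differentiableWithinAt
  · intro t ht
    rw [interior_Icc] at ht
    rw [(hasDerivAt_F t).deriv]
    apply div_nonpos_of_nonpos_of_nonneg _ (phi_pos t).le
    have ht0 : (0:ℝ) ≤ t := le_trans (Real.sqrt_nonneg 2) ht.1.le
    linarith [mills_bound ht0]

theorem h1_le_h : ∀ x : ℝ, h1 x ≤ h x := by
  intro x
  unfold h1
  split_ifs with hx0 hx1 hx2 hx3
  · show (1:ℝ) ≤ h x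
    unfold h
    have hm : Phibar 0 ≤ Phibar x := Phibar_anti hx0
    rw [Phibar_zero] at hm
    nlinarith [keyC, c2_pos, Phibar_pos x]
  · unfold h
    have hmon : Phibar 1 ≤ Phibar x := Phibar_anti hx1
    nlinarith [keyA, mul_nonneg c2_pos.le (sub_nonneg.2 hmon)]
  · unfold h
    push_neg at hx1
    rcases G_min hx1.le hx2.le with hG | hG
    · rw [div_le_iff₀ (by nlinarith : (0:ℝ) < 2*x^2)]
      nlinarith [keyA, mul_nonneg c2_pos.le (sub_nonneg.2 hG)]
    · rw [div_le_iff₀ (by nlinarith : (0:ℝ) < 2*x^2)]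
      nlinarith [keyB, mul_nonneg c2_pos.le (sub_nonneg.2 hG)]
  · push_neg at hx2
    have hF := F_anti ⟨hx2, hx3⟩ ⟨sqrt2_le_sqrt3, le_rfl⟩ hx3
    rw [div_le_div_iff₀ (phi_pos _) (phi_pos _)] at hF
    unfold g h c2 mills
    have h3 := Phibar_pos (Real.sqrt 3)
    have hxp := Phibar_pos x
    have hc1 := c1_pos
    have hkey : phi x ≤ phi (Real.sqrt 3) / Phibar (Real.sqrt 3) * Phibar x := by
      rw [div_mul_eq_mul_div, le_div_iff₀ h3]
      nlinarith
    nlinarith [mul_le_mul_of_nonneg_left hkey hc1.le]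
  · exact le_rfl
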